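/- Let a₁, …, a_r be distinct nonzero complex numbers, a₀ = 0, and A = ℂ[t^{±1}, (t−a₁)^{−1}, …, (t−a_r)^{−1}] ⊆ ℂ(t). If f, g ∈ A satisfy t·f'(t) = g(t)·f(t), then f = c·t^{m₀}·(t−a₁)^{m₁}⋯(t−a_r)^{m_r} for some c ∈ ℂ and integers m₀, m₁, …, m_r. -/

import Mathlib

open Polynomial in
private lemma aux_der (Der : Derivation ℂ (RatFunc ℂ) (RatFunc ℂ)) (hDer : Der RatFunc.X = 1)
    (p : Polynomial ℂ) :
    Der (algebraMap (Polynomial ℂ) (RatFunc ℂ) p) =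
      algebraMap (Polynomial ℂ) (RatFunc ℂ) (derivative p) := by
  induction p using Polynomial.induction_on with
  | C c =>
      rw [derivative_C, map_zero, RatFunc.algebraMap_C, ← RatFunc.algebraMap_eq_C,
        Derivation.map_algebraMap]
  | add p q hp hq => rw [map_add, map_add, hp, hq, derivative_add, map_add]
  | monomial n c ih =>
      have h1 : (C c * X ^ (n + 1) : Polynomial ℂ) = (C c * X ^ n) * X := by ring
      rw [h1, map_mul, Der.leibniz, ih, RatFunc.algebraMap_X, hDer]
      simp only [derivative_mul, derivative_X, derivative_C, mul_one, map_add, map_mul,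
        RatFunc.algebraMap_X, smul_eq_mul, zero_mul, zero_add]
      ring

open Polynomial in
private lemma aux_fact (r : ℕ) (a : Fin r → ℂ) (hinj : Function.Injective a) (hne : ∀ i, a i ≠ 0)
    (p : Polynomial ℂ) (hp : p ≠ 0)
    (hroots : ∀ z, p.IsRoot z → z = 0 ∨ ∃ i, z = a i) :
    ∃ (c : ℂ) (n₀ : ℕ) (n : Fin r → ℕ),
      p = C c * X ^ n₀ * ∏ i : Fin r, (X - C (a i)) ^ n i := by
  classical
  refine ⟨p.leadingCoeff, p.rootMultiplicity 0, fun i => p.rootMultiplicity (a i), ?_⟩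
  have hsplit : p.Splits := IsAlgClosed.splits p
  have h1 := hsplit.eq_prod_roots
  rw [prod_multiset_root_eq_finset_root] at h1
  have hsub : p.roots.toFinset ⊆ insert (0 : ℂ) (Finset.image a Finset.univ) := by
    intro b hb
    rcases hroots b (isRoot_of_mem_roots (Multiset.mem_toFinset.mp hb)) with h | ⟨i, hi⟩
    · exact Finset.mem_insert.mpr (Or.inl h)
    · exact Finset.mem_insert.mpr (Or.inr (hi ▸ Finset.mem_image_of_mem a (Finset.mem_univ i)))
  have h2 : ∏ b ∈ p.roots.toFinset, (X - C b) ^ rootMultiplicity b p =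
      ∏ b ∈ insert (0 : ℂ) (Finset.image a Finset.univ), (X - C b) ^ rootMultiplicity b p := by
    refine Finset.prod_subset hsub fun b _ hb => ?_
    have hnr : ¬p.IsRoot b := fun h => hb (Multiset.mem_toFinset.mpr (mem_roots'.mpr ⟨hp, h⟩))
    rw [rootMultiplicity_eq_zero hnr, pow_zero]
  have h0 : (0 : ℂ) ∉ Finset.image a Finset.univ := by
    simp only [Finset.mem_image, Finset.mem_univ, true_and, not_exists]
    exact fun i h => hne i h
  rw [h2, Finset.prod_insert h0, map_zero, sub_zero,
    Finset.prod_image (fun i _ j _ h => hinj h), ← mul_assoc] at h1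
  exact h1


open Polynomial in
private lemma aux_mem (r : ℕ) (a : Fin r → ℂ) (f : RatFunc ℂ)
    (hf : f ∈ Algebra.adjoin ℂ
      (({RatFunc.X, (RatFunc.X)⁻¹} ∪ Set.range fun i : Fin r =>
        (RatFunc.X - RatFunc.C (a i))⁻¹) : Set (RatFunc ℂ))) :
    ∃ (p d : Polynomial ℂ), d ≠ 0 ∧ (∀ z, d.IsRoot z → z = 0 ∨ ∃ i, z = a i) ∧
      f * algebraMap (Polynomial ℂ) (RatFunc ℂ) d = algebraMap (Polynomial ℂ) (RatFunc ℂ) p := by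
  induction hf using Algebra.adjoin_induction with
  | mem x hx =>
      rcases hx with (rfl | rfl) | ⟨i, rfl⟩
      · exact ⟨X, 1, one_ne_zero, by simp [IsRoot],
          by rw [map_one, mul_one, RatFunc.algebraMap_X]⟩
      · refine ⟨1, X, X_ne_zero, fun z hz => Or.inl (by simpa [IsRoot] using hz), ?_⟩
        rw [map_one, RatFunc.algebraMap_X, inv_mul_cancel₀ RatFunc.X_ne_zero]
      · refine ⟨1, X - C (a i), X_sub_C_ne_zero (a i),
          fun z hz => Or.inr ⟨i, by simpa [IsRoot, sub_eq_zero] using hz⟩, ?_⟩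
        have hmap : algebraMap (Polynomial ℂ) (RatFunc ℂ) (X - C (a i)) =
            RatFunc.X - RatFunc.C (a i) := by
          rw [map_sub, RatFunc.algebraMap_X, RatFunc.algebraMap_C]
        have hne0 : RatFunc.X - RatFunc.C (a i) ≠ 0 := by
          rw [← hmap]
          exact (map_ne_zero_iff _ (RatFunc.algebraMap_injective ℂ)).mpr (X_sub_C_ne_zero (a i))
        rw [map_one, hmap, inv_mul_cancel₀ hne0]
  | algebraMap c =>
      exact ⟨C c, 1, one_ne_zero, by simp [IsRoot],
        by rw [map_one, mul_one, RatFunc.algebraMap_C, RatFunc.algebraMap_eq_C]⟩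
  | add x y hx hy ihx ihy =>
      obtain ⟨p1, d1, hd1, hr1, he1⟩ := ihx
      obtain ⟨p2, d2, hd2, hr2, he2⟩ := ihy
      refine ⟨p1 * d2 + p2 * d1, d1 * d2, mul_ne_zero hd1 hd2, fun z hz => ?_, ?_⟩
      · rcases (by simpa [IsRoot] using hz : eval z d1 = 0 ∨ eval z d2 = 0) with h | h
        · exact hr1 z h
        · exact hr2 z h
      · simp only [map_add, map_mul]
        linear_combination algebraMap (Polynomial ℂ) (RatFunc ℂ) d2 * he1 +
          algebraMap (Polynomial ℂ) (RatFunc ℂ) d1 * he2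
  | mul x y hx hy ihx ihy =>
      obtain ⟨p1, d1, hd1, hr1, he1⟩ := ihx
      obtain ⟨p2, d2, hd2, hr2, he2⟩ := ihy
      refine ⟨p1 * p2, d1 * d2, mul_ne_zero hd1 hd2, fun z hz => ?_, ?_⟩
      · rcases (by simpa [IsRoot] using hz : eval z d1 = 0 ∨ eval z d2 = 0) with h | h
        · exact hr1 z h
        · exact hr2 z h
      · simp only [map_mul]
        linear_combination algebraMap (Polynomial ℂ) (RatFunc ℂ) d2 * y * he1 +
          algebraMap (Polynomial ℂ) (RatFunc ℂ) p1 * he2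

open RatFunc in
/-- if `f, g ∈ A = ℂ[t^{±1}, (t-a₁)^{-1}, …, (t-a_r)^{-1}]` satisfy
`t·f' = g·f` (with `Der` the derivation `d/dt` of `ℂ(t)`), then
`f = c·t^{m₀}·∏ᵢ (t-aᵢ)^{mᵢ}`. -/
theorem stmt_16 (r : ℕ) (a : Fin r → ℂ) (hinj : Function.Injective a)
    (hne : ∀ i, a i ≠ 0)
    (Der : Derivation ℂ (RatFunc ℂ) (RatFunc ℂ)) (hDer : Der RatFunc.X = 1)
    (A : Subalgebra ℂ (RatFunc ℂ))
    (hA : A = Algebra.adjoin ℂ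
      ({RatFunc.X, (RatFunc.X)⁻¹} ∪ Set.range fun i : Fin r =>
        (RatFunc.X - RatFunc.C (a i))⁻¹))
    (f g : RatFunc ℂ) (hf : f ∈ A) (hg : g ∈ A)
    (heq : RatFunc.X * Der f = g * f) :
    ∃ (c : ℂ) (m₀ : ℤ) (m : Fin r → ℤ),
      f = RatFunc.C c * RatFunc.X ^ m₀ *
        ∏ i : Fin r, (RatFunc.X - RatFunc.C (a i)) ^ (m i) := by
  classical
  by_cases hf0 : f = 0
  · exact ⟨0, 0, 0, by simp [hf0]⟩
  subst hA
  set φ := algebraMap (Polynomial ℂ) (RatFunc ℂ) with hφ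
  obtain ⟨P, D, hD0, hDr, hPe⟩ := aux_mem r a f hf
  obtain ⟨Q, E, hE0, hEr, hQe⟩ := aux_mem r a g hg
  have hφinj := RatFunc.algebraMap_injective ℂ
  have hφD : φ D ≠ 0 := (map_ne_zero_iff _ hφinj).mpr hD0
  have hP0 : P ≠ 0 := by
    intro h
    rw [h, map_zero] at hPe
    exact hf0 ((mul_eq_zero.mp hPe).resolve_right hφD)
  -- derivative relation
  have hder : Der f * φ D + f * φ (Polynomial.derivative D) = φ (Polynomial.derivative P) := by
    have h := congrArg Der hPe
    rw [Der.leibniz, aux_der Der hDer, aux_der Der hDer] at h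
    rw [← h, smul_eq_mul, smul_eq_mul]
    ring
  -- key polynomial identity
  have key : (Polynomial.X * E) *
      (Polynomial.derivative P * D - P * Polynomial.derivative D) = Q * P * D := by
    apply hφinj
    simp only [map_mul, map_sub, hφ, RatFunc.algebraMap_X]
    rw [← hφ, ← hder, ← hPe, ← hQe]
    linear_combination (φ E * φ D ^ 2) * heq
  -- all roots of P lie in {0} ∪ range a
  have hProots : ∀ z, P.IsRoot z → z = 0 ∨ ∃ i, z = a i := by
    intro z hz
    by_contra hcon
    push_neg at hcon
    obtain ⟨hz0, hzi⟩ := hcon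
    set n := Polynomial.rootMultiplicity z P with hn
    have hnpos : 0 < n := (Polynomial.rootMultiplicity_pos hP0).mpr hz
    have hprime : Prime (Polynomial.X - Polynomial.C z) := Polynomial.prime_X_sub_C z
    have h1 : (Polynomial.X - Polynomial.C z) ^ n ∣ Q * P * D :=
      ((Polynomial.pow_rootMultiplicity_dvd P z).mul_left Q).mul_right D
    rw [← key] at h1
    have hXE : ¬ (Polynomial.X - Polynomial.C z) ∣ (Polynomial.X * E) := by
      intro h
      have h' := Polynomial.dvd_iff_isRoot.mp h
      simp only [Polynomial.IsRoot, Polynomial.eval_mul, Polynomial.eval_X] at h'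
      rcases mul_eq_zero.mp h' with h'' | h''
      · exact hz0 h''
      · rcases hEr z h'' with h3 | ⟨i, hi⟩
        · exact hz0 h3
        · exact hzi i hi
    have h2 : (Polynomial.X - Polynomial.C z) ^ n ∣
        (Polynomial.derivative P * D - P * Polynomial.derivative D) :=
      hprime.pow_dvd_of_dvd_mul_left n hXE h1
    have h3 : (Polynomial.X - Polynomial.C z) ^ n ∣ P * Polynomial.derivative D :=
      (Polynomial.pow_rootMultiplicity_dvd P z).mul_right _
    have h4 : (Polynomial.X - Polynomial.C z) ^ n ∣ Polynomial.derivative P * D := by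
      have := dvd_add h2 h3
      simpa using this
    have hDd : ¬ (Polynomial.X - Polynomial.C z) ∣ D := by
      intro h
      rcases hDr z (Polynomial.dvd_iff_isRoot.mp h) with h' | ⟨i, h'⟩
      · exact hz0 h'
      · exact hzi i h'
    have h5 : (Polynomial.X - Polynomial.C z) ^ n ∣ Polynomial.derivative P :=
      hprime.pow_dvd_of_dvd_mul_right n hDd h4
    have hP' : Polynomial.derivative P ≠ 0 := by
      intro h
      have hd0 := Polynomial.natDegree_eq_zero_of_derivative_eq_zero h
      have hPC := Polynomial.eq_C_of_natDegree_eq_zero hd0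
      rw [hPC] at hz
      simp only [Polynomial.IsRoot, Polynomial.eval_C] at hz
      rw [hPC, hz, map_zero] at hP0
      exact hP0 rfl
    have hle : n ≤ Polynomial.rootMultiplicity z (Polynomial.derivative P) :=
      (Polynomial.le_rootMultiplicity_iff hP').mpr h5
    rw [Polynomial.derivative_rootMultiplicity_of_root hz] at hle
    omega
  -- factor P and D
  obtain ⟨c1, n₀, n, hPfac⟩ := aux_fact r a hinj hne P hP0 hProots
  obtain ⟨c2, k₀, k, hDfac⟩ := aux_fact r a hinj hne D hD0 hDr
  have hc2 : c2 ≠ 0 := by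
    intro h
    rw [hDfac, h] at hD0
    simp at hD0
  refine ⟨c1 / c2, (n₀ : ℤ) - k₀, fun i => (n i : ℤ) - k i, ?_⟩
  have hY : (RatFunc.X : RatFunc ℂ) ≠ 0 := RatFunc.X_ne_zero
  have hZ : ∀ i, (RatFunc.X - RatFunc.C (a i)) ≠ 0 := by
    intro i
    have : φ (Polynomial.X - Polynomial.C (a i)) = RatFunc.X - RatFunc.C (a i) := by
      rw [map_sub, hφ, RatFunc.algebraMap_X, RatFunc.algebraMap_C]
    rw [← this]
    exact (map_ne_zero_iff _ hφinj).mpr (Polynomial.X_sub_C_ne_zero (a i))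
  have hφP : φ P = RatFunc.C c1 * RatFunc.X ^ n₀ *
      ∏ i : Fin r, (RatFunc.X - RatFunc.C (a i)) ^ n i := by
    rw [hPfac]
    simp only [map_mul, map_pow, map_prod, map_sub, hφ, RatFunc.algebraMap_X,
      RatFunc.algebraMap_C]
  have hφD2 : φ D = RatFunc.C c2 * RatFunc.X ^ k₀ *
      ∏ i : Fin r, (RatFunc.X - RatFunc.C (a i)) ^ k i := by
    rw [hDfac]
    simp only [map_mul, map_pow, map_prod, map_sub, hφ, RatFunc.algebraMap_X,
      RatFunc.algebraMap_C]
  have hmain : (RatFunc.C (c1 / c2) * (RatFunc.X : RatFunc ℂ) ^ ((n₀ : ℤ) - k₀) *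
      ∏ i : Fin r, (RatFunc.X - RatFunc.C (a i)) ^ ((n i : ℤ) - k i)) * φ D = φ P := by
    rw [hφD2, hφP]
    have e0 : (RatFunc.X : RatFunc ℂ) ^ ((n₀ : ℤ) - k₀) * RatFunc.X ^ k₀ = RatFunc.X ^ n₀ := by
      rw [← zpow_natCast (RatFunc.X : RatFunc ℂ) k₀, ← zpow_add₀ hY, sub_add_cancel,
        zpow_natCast]
    have eC : RatFunc.C (c1 / c2) * RatFunc.C c2 = RatFunc.C c1 := by
      rw [← map_mul, div_mul_cancel₀ _ hc2]
    have eP : (∏ i : Fin r, (RatFunc.X - RatFunc.C (a i)) ^ ((n i : ℤ) - k i)) *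
        ∏ i : Fin r, (RatFunc.X - RatFunc.C (a i)) ^ k i =
        ∏ i : Fin r, (RatFunc.X - RatFunc.C (a i)) ^ n i := by
      rw [← Finset.prod_mul_distrib]
      refine Finset.prod_congr rfl fun i _ => ?_
      rw [← zpow_natCast (RatFunc.X - RatFunc.C (a i)) (k i), ← zpow_add₀ (hZ i),
        sub_add_cancel, zpow_natCast]
    calc RatFunc.C (c1 / c2) * RatFunc.X ^ ((n₀ : ℤ) - k₀) *
          (∏ i : Fin r, (RatFunc.X - RatFunc.C (a i)) ^ ((n i : ℤ) - k i)) *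
          (RatFunc.C c2 * RatFunc.X ^ k₀ * ∏ i : Fin r, (RatFunc.X - RatFunc.C (a i)) ^ k i)
        = (RatFunc.C (c1 / c2) * RatFunc.C c2) * (RatFunc.X ^ ((n₀ : ℤ) - k₀) * RatFunc.X ^ k₀) *
          ((∏ i : Fin r, (RatFunc.X - RatFunc.C (a i)) ^ ((n i : ℤ) - k i)) *
            ∏ i : Fin r, (RatFunc.X - RatFunc.C (a i)) ^ k i) := by ring
      _ = RatFunc.C c1 * RatFunc.X ^ n₀ *
            ∏ i : Fin r, (RatFunc.X - RatFunc.C (a i)) ^ n i := by rw [e0, eC, eP]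
  exact mul_right_cancel₀ hφD (hPe.trans hmain.symm)
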